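/- Let Λ be a left artinian ring and let Q₁, …, Qₙ be finitely generated indecomposable projective Λ-modules such that every submodule of each Qᵢ is either projective or simple. If M is an indecomposable submodule of the direct sum Q₁ ⊕ ⋯ ⊕ Qₙ, then M is either projective or simple. -/

import Mathlib

/-- rad X = (Jacobson radical of Λ) • X -/
def ModuleRad (Λ : Type) [Ring Λ] (X : Type) [AddCommGroup X] [Module Λ X] :
    Submodule Λ X :=
  Submodule.span Λ {z : X | ∃ r ∈ Ideal.jacobson (⊥ : Ideal Λ), ∃ x : X, z = r • x}

/-- composition length of a module, as the supremum of lengths of strictly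
increasing chains of submodules from `⊥` to `⊤`. -/
noncomputable def ModuleLength (Λ : Type) [Ring Λ] (X : Type) [AddCommGroup X]
    [Module Λ X] : ℕ∞ :=
  ⨆ n ∈ {n : ℕ | ∃ c : Fin (n + 1) → Submodule Λ X,
      StrictMono c ∧ c 0 = ⊥ ∧ c (Fin.last n) = ⊤}, (n : ℕ∞)

/-- a nonzero module that is not an internal direct sum of two nonzero submodules -/
def IndecomposableModule (Λ : Type) [Ring Λ] (X : Type) [AddCommGroup X]
    [Module Λ X] : Prop :=
  (∃ x : X, x ≠ 0) ∧
    ¬ ∃ A B : Submodule Λ X, A ≠ ⊥ ∧ B ≠ ⊥ ∧ IsCompl A B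

/-- a minimal projective resolution of `M` -/
structure MinProjRes (Λ : Type) [Ring Λ] (M : Type) [AddCommGroup M] [Module Λ M] where
  P : ℕ → Type
  acg : ∀ n, AddCommGroup (P n)
  mod : ∀ n, Module Λ (P n)
  proj : ∀ n, Module.Projective Λ (P n)
  fg : ∀ n, Module.Finite Λ (P n)
  d0 : P 0 →ₗ[Λ] M
  d : ∀ n, P (n + 1) →ₗ[Λ] P n
  surj : Function.Surjective d0
  exact0 : LinearMap.range (d 0) = LinearMap.ker d0
  exact : ∀ n, LinearMap.range (d (n + 1)) = LinearMap.ker (d n)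
  min0 : LinearMap.ker d0 ≤ ModuleRad Λ (P 0)
  min : ∀ n, LinearMap.ker (d n) ≤ ModuleRad Λ (P (n + 1))

attribute [instance] MinProjRes.acg MinProjRes.mod

/-- the projective dimension read off from a minimal projective resolution:
`sup {n | Pₙ ≠ 0}` in `ℕ∞` -/
noncomputable def MinProjRes.pd {Λ : Type} [Ring Λ] {M : Type} [AddCommGroup M]
    [Module Λ M] (res : MinProjRes Λ M) : ℕ∞ :=
  ⨆ n ∈ {n : ℕ | ∃ x : res.P n, x ≠ 0}, (n : ℕ∞)

/-- Condition (F) -/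
def ConditionF (Λ : Type) [Ring Λ] : Prop :=
  ∀ (P : Type) [AddCommGroup P] [Module Λ P],
    Module.Finite Λ P → Module.Projective Λ P → IndecomposableModule Λ P →
      (Module.Projective Λ ↥(ModuleRad Λ P) ∨ IsSimpleModule Λ ↥(ModuleRad Λ P))

/-- an indecomposable submodule of a finite direct sum of
finitely generated indecomposable projective modules, all of whose submodules
are projective or simple, is itself projective or simple. -/
theorem indec_submodule_of_dsum (Λ : Type) [Ring Λ] [IsArtinianRing Λ]
    (n : ℕ) (Q : Fin n → Type) [∀ i, AddCommGroup (Q i)] [∀ i, Module Λ (Q i)]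
    (hfg : ∀ i, Module.Finite Λ (Q i)) (hproj : ∀ i, Module.Projective Λ (Q i))
    (hindec : ∀ i, IndecomposableModule Λ (Q i))
    (hsub : ∀ i (N : Submodule Λ (Q i)),
      Module.Projective Λ ↥N ∨ IsSimpleModule Λ ↥N)
    (M : Submodule Λ (∀ i, Q i)) (hM : IndecomposableModule Λ ↥M) :
    Module.Projective Λ ↥M ∨ IsSimpleModule Λ ↥M := by
  classical
  set p : ∀ i, ↥M →ₗ[Λ] Q i := fun i => (LinearMap.proj i).comp M.subtype with hp
  by_cases hcase : ∃ i, LinearMap.range (p i) ≠ ⊥ ∧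
      Module.Projective Λ ↥(LinearMap.range (p i))
  · obtain ⟨i, hne, hPproj⟩ := hcase
    set π : ↥M →ₗ[Λ] ↥(LinearMap.range (p i)) := (p i).rangeRestrict with hπ
    have hπs : Function.Surjective π := (p i).surjective_rangeRestrict
    obtain ⟨s, hs⟩ := Module.projective_lifting_property π LinearMap.id hπs
    have hse : ∀ y, π (s y) = y := fun y => congrFun (congrArg DFunLike.coe hs) y
    set q : Submodule Λ ↥M := LinearMap.range s with hq
    set f : ↥M →ₗ[Λ] ↥q := LinearMap.codRestrict q (s.comp π)
      (fun x => LinearMap.mem_range.mpr ⟨π x, rfl⟩) with hf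
    have hfid : ∀ x : ↥q, f (x : ↥M) = x := by
      rintro ⟨-, y, rfl⟩
      apply Subtype.ext
      show s (π (s y)) = s y
      rw [hse]
    have hcompl := LinearMap.isCompl_of_proj hfid
    have hdi : q = ⊥ ∨ LinearMap.ker f = ⊥ := by
      by_contra h
      push_neg at h
      exact hM.2 ⟨q, LinearMap.ker f, h.1, h.2, hcompl⟩
    rcases hdi with h | h
    · exfalso
      obtain ⟨y, hy, hy0⟩ := Submodule.exists_mem_ne_zero_of_ne_bot hne
      have : s ⟨y, hy⟩ = 0 := by
        have : s ⟨y, hy⟩ ∈ q := LinearMap.mem_range.mpr ⟨⟨y, hy⟩, rfl⟩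
        rw [h] at this
        simpa using this
      have h1 : π (s ⟨y, hy⟩) = ⟨y, hy⟩ := hse _
      rw [this, map_zero] at h1
      exact hy0 (congrArg Subtype.val h1.symm)
    · have hkerπ : LinearMap.ker π = ⊥ := by
        rw [eq_bot_iff]
        intro x hx
        have hx' : π x = 0 := hx
        have : f x = 0 := by
          apply Subtype.ext
          show s (π x) = 0
          rw [hx', map_zero]
        have : x ∈ LinearMap.ker f := this
        rw [h] at this
        simpa using this
      have hbij : Function.Bijective π := ⟨LinearMap.ker_eq_bot.mp hkerπ, hπs⟩
      exact Or.inl (Module.Projective.of_equiv (LinearEquiv.ofBijective π hbij).symm)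
  · push_neg at hcase
    have hss : ∀ i, IsSemisimpleModule Λ ↥(LinearMap.range (p i)) := by
      intro i
      rcases hsub i (LinearMap.range (p i)) with hpr | hsi
      · have hb : LinearMap.range (p i) = ⊥ := by
          by_contra hb
          exact (hcase i hb) hpr
        haveI : Subsingleton ↥(LinearMap.range (p i)) := by
          rw [hb]; infer_instance
        haveI : Subsingleton (Submodule Λ ↥(LinearMap.range (p i))) :=
          inferInstance
        exact (isSemisimpleModule_iff Λ _).mpr ⟨fun a => ⟨⊥, disjoint_bot_right,
          codisjoint_bot.mpr (Subsingleton.elim a ⊤)⟩⟩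
      · exact IsSemisimpleModule.of_sSup_simples_eq_top
          (by
            haveI := hsi
            exact sSup_simples_eq_top_iff_isSemisimpleModule.mpr inferInstance)
    haveI hpiss : IsSemisimpleModule Λ (∀ i, ↥(LinearMap.range (p i))) := by
      apply isSemisimpleModule_of_isSemisimpleModule_submodule'
        (p := fun i => LinearMap.range
          (LinearMap.single Λ (fun j => ↥(LinearMap.range (p j))) i))
      · intro i
        haveI := hss i
        exact IsSemisimpleModule.range _
      · simp_rw [LinearMap.range_eq_map, Submodule.iSup_map_single,
          Submodule.pi_top]
    set F : ↥M →ₗ[Λ] (∀ i, ↥(LinearMap.range (p i))) :=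
      LinearMap.pi (fun i => (p i).rangeRestrict) with hF
    have hFinj : Function.Injective F := by
      rw [← LinearMap.ker_eq_bot, eq_bot_iff]
      intro x hx
      have h1 : F x = 0 := hx
      have hx0 : (x : ∀ i, Q i) = 0 := by
        funext i
        have h2 : ((F x i : Q i)) = ((0 : ∀ j, ↥(LinearMap.range (p j))) i : Q i) := by
          rw [h1]
        exact h2
      simp only [Submodule.mem_bot]
      exact Subtype.ext hx0
    haveI : IsSemisimpleModule Λ ↥M :=
      IsSemisimpleModule.congr (LinearEquiv.ofInjective F hFinj)
    right
    obtain ⟨x, hx⟩ := hM.1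
    haveI : Nontrivial ↥M := ⟨x, 0, hx⟩
    rw [isSimpleModule_iff]
    constructor
    intro A
    obtain ⟨B, hB⟩ := exists_isCompl A
    by_cases hA : A = ⊥
    · exact Or.inl hA
    · have hB0 : B = ⊥ := by
        by_contra hB0
        exact hM.2 ⟨A, B, hA, hB0, hB⟩
      right
      exact codisjoint_bot.mp (hB0 ▸ hB.codisjoint)
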